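/- Suppose the random vectors Z_n have densities p_n and converge weakly in distribution to a standard normal random vector Z in ℝ^d. If ‖p_n‖_{L²(ℝ^d)} → ‖φ‖_{L²(ℝ^d)} as n → ∞, then ‖p_n − φ‖_{L²(ℝ^d)} → 0 as n → ∞. -/

import Mathlib

open MeasureTheory Filter Real
open scoped ENNReal BoundedContinuousFunction

private lemma aux_max_mul (a : ℝ) : max a 0 * max (-a) 0 = 0 := by
  rcases le_total a 0 with h | h
  · simp [max_eq_right h]
  · simp [max_eq_right (neg_nonpos.2 h)]

private lemma aux_max_sub (a : ℝ) : max a 0 - max (-a) 0 = a := by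
  rcases le_total a 0 with h | h
  · simp [max_eq_right h, max_eq_left (neg_nonneg.2 h)]
  · simp [max_eq_left h, max_eq_right (neg_nonpos.2 h)]

private lemma aux_abs_max (a : ℝ) : |max a 0| ≤ |a| := by
  rcases le_total a 0 with h | h
  · simp [max_eq_right h]
  · simp [max_eq_left h]

private lemma inner_toLp_toLp' {α} [MeasurableSpace α] (μ : Measure α) (f g : α → ℝ)
    (hf : MemLp f 2 μ) (hg : MemLp g 2 μ) :
    (inner ℝ (hf.toLp f) (hg.toLp g) : ℝ) = ∫ x, f x * g x ∂μ := by
  rw [L2.inner_def]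
  refine integral_congr_ae ?_
  filter_upwards [hf.coeFn_toLp, hg.coeFn_toLp] with x h1 h2
  simp [h1, h2, RCLike.inner_apply, mul_comm]

/-- **Remark preceding the proof of Theorem 2.1 (equivalence (2.6) ⟹ (2.1)).**
Suppose random vectors `Z n` in `ℝ^d` have densities `p n ∈ L²` and converge
weakly in distribution to a standard normal random vector.  If
`‖p n‖_{L²} → ‖φ‖_{L²}`, then `‖p n − φ‖_{L²} → 0`. -/
theorem L2_convergence_of_weak_convergence_and_norm_convergence
    {Ω : Type*} [MeasurableSpace Ω] (μ : Measure Ω) [IsProbabilityMeasure μ]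
    {d : ℕ}
    (Z : ℕ → Ω → EuclideanSpace ℝ (Fin d)) (hZmeas : ∀ n, Measurable (Z n))
    (p : ℕ → EuclideanSpace ℝ (Fin d) → ℝ)
    (hpL2 : ∀ n, MemLp (p n) 2 volume)
    (hdens : ∀ n, Measure.map (Z n) μ
      = volume.withDensity (fun x => ENNReal.ofReal (p n x)))
    (φ : EuclideanSpace ℝ (Fin d) → ℝ)
    (hφ : ∀ x, φ x = ((Real.sqrt (2 * π)) ^ d)⁻¹ * Real.exp (-‖x‖ ^ 2 / 2))
    (hweak : ∀ g : EuclideanSpace ℝ (Fin d) →ᵇ ℝ,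
      Tendsto (fun n => ∫ ω, g (Z n ω) ∂μ) atTop (nhds (∫ x, g x * φ x)))
    (hnorm : Tendsto (fun n => eLpNorm (p n) 2 volume) atTop
      (nhds (eLpNorm φ 2 volume))) :
    Tendsto (fun n => eLpNorm (fun x => p n x - φ x) 2 volume) atTop (nhds 0) := by
  classical
  set c : ℝ := ((Real.sqrt (2 * π)) ^ d)⁻¹ with hc_def
  have hc : 0 < c := by
    have h2π : (0:ℝ) < 2 * π := by positivity
    have := Real.sqrt_pos.2 h2π
    positivity
  -- basic properties of φ
  have hφcont : Continuous φ := by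
    have : Continuous fun x : EuclideanSpace ℝ (Fin d) => c * Real.exp (-‖x‖ ^ 2 / 2) := by
      fun_prop
    exact (funext hφ : φ = _) ▸ this
  have hφpos : ∀ x, 0 < φ x := fun x => by
    rw [hφ x]; exact mul_pos hc (Real.exp_pos _)
  have hφbd : ∀ x, ‖φ x‖ ≤ c := fun x => by
    rw [Real.norm_eq_abs, abs_of_pos (hφpos x), hφ x]
    have h1 : Real.exp (-‖x‖ ^ 2 / 2) ≤ 1 := by
      rw [Real.exp_le_one_iff]
      have : (0:ℝ) ≤ ‖x‖ ^ 2 := by positivity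
      linarith
    calc c * Real.exp (-‖x‖ ^ 2 / 2) ≤ c * 1 := by
          exact mul_le_mul_of_nonneg_left h1 hc.le
      _ = c := mul_one c
  -- φ² is integrable
  have hgauss : Integrable (fun v : EuclideanSpace ℝ (Fin d) => Real.exp (-‖v‖ ^ 2)) volume := by
    have h := (GaussianFourier.integrable_cexp_neg_mul_sq_norm_add
      (V := EuclideanSpace ℝ (Fin d)) (b := (1 : ℂ)) (by simp) 0 0).norm
    refine h.congr (Eventually.of_forall fun v => ?_)
    simp [Complex.norm_exp, ← Complex.ofReal_pow]
  have hφsq : Integrable (fun x => φ x ^ 2) volume := by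
    refine (hgauss.const_mul (c ^ 2)).congr (Eventually.of_forall fun x => ?_)
    show c ^ 2 * rexp (-‖x‖ ^ 2) = φ x ^ 2
    rw [hφ x, mul_pow, sq (Real.exp _), ← Real.exp_add]
    ring_nf
  have hφmem : MemLp φ 2 volume :=
    (memLp_two_iff_integrable_sq hφcont.aestronglyMeasurable).2 hφsq
  -- positive and negative parts of p n
  set q : ℕ → EuclideanSpace ℝ (Fin d) → ℝ := fun n x => max (p n x) 0 with hq_def
  set r : ℕ → EuclideanSpace ℝ (Fin d) → ℝ := fun n x => max (-(p n x)) 0 with hr_def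
  have hqmem : ∀ n, MemLp (q n) 2 volume := fun n =>
    MemLp.of_le (hpL2 n) ((hpL2 n).1.sup aestronglyMeasurable_const)
      (Eventually.of_forall fun x => by
        simpa [Real.norm_eq_abs] using aux_abs_max (p n x))
  have hrmem : ∀ n, MemLp (r n) 2 volume := fun n =>
    MemLp.of_le (hpL2 n) ((hpL2 n).1.neg.sup aestronglyMeasurable_const)
      (Eventually.of_forall fun x => by
        have := aux_abs_max (-(p n x))
        simpa [Real.norm_eq_abs, abs_neg] using this)
  -- Lp elements
  set P : ℕ → Lp ℝ 2 (volume : Measure (EuclideanSpace ℝ (Fin d))) :=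
    fun n => (hpL2 n).toLp (p n) with hP_def
  set Q : ℕ → Lp ℝ 2 (volume : Measure (EuclideanSpace ℝ (Fin d))) :=
    fun n => (hqmem n).toLp (q n) with hQ_def
  set R : ℕ → Lp ℝ 2 (volume : Measure (EuclideanSpace ℝ (Fin d))) :=
    fun n => (hrmem n).toLp (r n) with hR_def
  set Φ : Lp ℝ 2 (volume : Measure (EuclideanSpace ℝ (Fin d))) :=
    hφmem.toLp φ with hΦ_def
  set b : ℝ := ‖Φ‖ with hb_def
  -- relation P = Q - R
  have hPQR : ∀ n, P n = Q n - R n := fun n => by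
    rw [hP_def, hQ_def, hR_def, ← MemLp.toLp_sub (hqmem n) (hrmem n)]
    exact MemLp.toLp_congr _ _ (Eventually.of_forall fun x =>
      (aux_max_sub (p n x)).symm)
  -- orthogonality
  have hQR : ∀ n, (inner ℝ (Q n) (R n) : ℝ) = 0 := fun n => by
    rw [hQ_def, hR_def, inner_toLp_toLp']
    have : (fun x => q n x * r n x) = fun _ => 0 :=
      funext fun x => aux_max_mul (p n x)
    rw [this, integral_zero]
  -- Pythagoras
  have hpyth : ∀ n, ‖P n‖ ^ 2 = ‖Q n‖ ^ 2 + ‖R n‖ ^ 2 := fun n => by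
    rw [hPQR n, norm_sub_sq_real, hQR n]; ring
  -- B = ∫ φ² = b²
  have hBb : ∫ x, φ x * φ x = b ^ 2 := by
    rw [hb_def, ← real_inner_self_eq_norm_sq, hΦ_def, inner_toLp_toLp']
  -- b > 0
  have hBpos : 0 < ∫ x, φ x * φ x := by
    refine (integral_pos_iff_support_of_nonneg
      (fun x => mul_nonneg (hφpos x).le (hφpos x).le) ?_).2 ?_
    · exact hφsq.congr (Eventually.of_forall fun x => by simp [sq])
    · have hsupp : (Function.support fun x => φ x * φ x) = Set.univ :=
        Set.eq_univ_of_forall fun x => (mul_pos (hφpos x) (hφpos x)).ne'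
      rw [hsupp]
      exact isOpen_univ.measure_pos volume ⟨0, trivial⟩
  have hbpos : 0 < b := by
    have hb2 : 0 < b ^ 2 := hBb ▸ hBpos
    rcases (norm_nonneg Φ).lt_or_eq with h | h
    · exact h
    · rw [hb_def, ← h] at hb2; simp at hb2
  -- weak convergence tested against φ
  have hCp : Tendsto (fun n => (inner ℝ (Q n) Φ : ℝ)) atTop (nhds (b ^ 2)) := by
    set φbc : EuclideanSpace ℝ (Fin d) →ᵇ ℝ :=
      BoundedContinuousFunction.ofNormedAddCommGroup φ hφcont c hφbd with hφbc_def
    have hco : ∀ x, φbc x = φ x := fun _ => rfl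
    have hmap : ∀ n, ∫ ω, φbc (Z n ω) ∂μ = ∫ x, q n x * φ x := by
      intro n
      have h1 : ∫ ω, φ (Z n ω) ∂μ = ∫ y, φ y ∂(Measure.map (Z n) μ) :=
        (integral_map (hZmeas n).aemeasurable hφcont.aestronglyMeasurable).symm
      have hpm : AEMeasurable (fun x => (p n x).toNNReal) volume :=
        measurable_real_toNNReal.comp_aemeasurable (hpL2 n).1.aemeasurable
      calc ∫ ω, φbc (Z n ω) ∂μ = ∫ ω, φ (Z n ω) ∂μ := by simp [hco]
        _ = ∫ y, φ y ∂(Measure.map (Z n) μ) := h1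
        _ = ∫ y, φ y ∂(volume.withDensity fun x => ((p n x).toNNReal : ℝ≥0∞)) := by
            rw [hdens n]; rfl
        _ = ∫ x, (p n x).toNNReal • φ x := integral_withDensity_eq_integral_smul₀ hpm φ
        _ = ∫ x, q n x * φ x := by
            refine integral_congr_ae (Eventually.of_forall fun x => ?_)
            simp [NNReal.smul_def, Real.coe_toNNReal', hq_def]
    have h := hweak φbc
    rw [funext hmap] at h
    have hlim : ∫ x, φbc x * φ x = b ^ 2 := by
      rw [← hBb]; rfl
    rw [hlim] at h
    refine h.congr fun n => ?_
    rw [hQ_def, hΦ_def, inner_toLp_toLp']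
  -- norm convergence
  have hAnorm : Tendsto (fun n => ‖P n‖) atTop (nhds b) := by
    have h := (ENNReal.tendsto_toReal hφmem.2.ne).comp hnorm
    have hb' : b = (eLpNorm φ 2 volume).toReal := by
      rw [hb_def, hΦ_def, Lp.norm_toLp]
    rw [hb']
    refine h.congr fun n => ?_
    simp [Function.comp, hP_def, Lp.norm_toLp]
  -- nonnegativity and Cauchy-Schwarz for the positive part
  have hCpnonneg : ∀ n, 0 ≤ (inner ℝ (Q n) Φ : ℝ) := fun n => by
    rw [hQ_def, hΦ_def, inner_toLp_toLp']
    exact integral_nonneg fun x => mul_nonneg (le_max_right _ _) (hφpos x).le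
  have hCS : ∀ n, (inner ℝ (Q n) Φ : ℝ) ≤ ‖Q n‖ * b := fun n => real_inner_le_norm _ _
  have hQlb : ∀ n, ((inner ℝ (Q n) Φ : ℝ) / b) ^ 2 ≤ ‖Q n‖ ^ 2 := fun n => by
    have h1 : (inner ℝ (Q n) Φ : ℝ) / b ≤ ‖Q n‖ := (div_le_iff₀ hbpos).2 (hCS n)
    exact pow_le_pow_left₀ (div_nonneg (hCpnonneg n) hbpos.le) h1 2
  -- ‖R n‖ → 0
  have hRsq : Tendsto (fun n => ‖R n‖ ^ 2) atTop (nhds 0) := by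
    have hg : Tendsto (fun n => ‖P n‖ ^ 2 - ((inner ℝ (Q n) Φ : ℝ) / b) ^ 2) atTop
        (nhds 0) := by
      have h := ((hAnorm.pow 2).sub ((hCp.div_const b).pow 2))
      have hx : b ^ 2 / b = b := by
        rw [sq, mul_div_assoc, div_self hbpos.ne', mul_one]
      simpa [hx] using h
    refine squeeze_zero (fun n => sq_nonneg _) (fun n => ?_) hg
    have := hpyth n
    have := hQlb n
    linarith
  have hRn : Tendsto (fun n => ‖R n‖) atTop (nhds 0) := by
    have h := (Real.continuous_sqrt.tendsto' 0 0 Real.sqrt_zero).comp hRsq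
    refine h.congr fun n => ?_
    simp [Function.comp, Real.sqrt_sq (norm_nonneg _)]
  -- inner (P n) Φ → b²
  have hRΦ : Tendsto (fun n => (inner ℝ (R n) Φ : ℝ)) atTop (nhds 0) := by
    refine squeeze_zero_norm (fun n => ?_) (by simpa using hRn.mul_const b)
    calc ‖(inner ℝ (R n) Φ : ℝ)‖ = |(inner ℝ (R n) Φ : ℝ)| := rfl
      _ ≤ ‖R n‖ * ‖Φ‖ := abs_real_inner_le_norm _ _
      _ = ‖R n‖ * b := by rw [hb_def]
  have hPΦ : Tendsto (fun n => (inner ℝ (P n) Φ : ℝ)) atTop (nhds (b ^ 2)) := by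
    have h := hCp.sub hRΦ
    rw [sub_zero] at h
    refine h.congr fun n => ?_
    rw [hPQR n, inner_sub_left]
  -- ‖P n - Φ‖ → 0
  have hfin0 : Tendsto (fun n => ‖P n‖ ^ 2 - 2 * (inner ℝ (P n) Φ : ℝ) + b ^ 2) atTop
      (nhds (b ^ 2 - 2 * b ^ 2 + b ^ 2)) :=
    ((hAnorm.pow 2).sub (hPΦ.const_mul 2)).add tendsto_const_nhds
  have hfin : Tendsto (fun n => ‖P n - Φ‖ ^ 2) atTop (nhds 0) := by
    have h0 : b ^ 2 - 2 * b ^ 2 + b ^ 2 = 0 := by ring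
    rw [h0] at hfin0
    refine hfin0.congr fun n => ?_
    rw [norm_sub_sq_real, hb_def]
  have hnormfin : Tendsto (fun n => ‖P n - Φ‖) atTop (nhds 0) := by
    have h := (Real.continuous_sqrt.tendsto' 0 0 Real.sqrt_zero).comp hfin
    refine h.congr fun n => ?_
    simp [Function.comp, Real.sqrt_sq (norm_nonneg _)]
  -- conclude
  have hkey : ∀ n, eLpNorm (fun x => p n x - φ x) 2 volume = ENNReal.ofReal ‖P n - Φ‖ := by
    intro n
    have hsub : MemLp (p n - φ) 2 volume := (hpL2 n).sub hφmem
    have h1 : ‖P n - Φ‖ = (eLpNorm (p n - φ) 2 volume).toReal := by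
      rw [← MemLp.toLp_sub (hpL2 n) hφmem, Lp.norm_toLp]
    rw [show (fun x => p n x - φ x) = p n - φ from rfl, h1,
      ENNReal.ofReal_toReal hsub.2.ne]
  have h := ENNReal.tendsto_ofReal hnormfin
  rw [ENNReal.ofReal_zero] at h
  exact h.congr fun n => (hkey n).symm
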